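/- Let K be an algebraically closed field, V a finite-dimensional K-vector space, and M ⊆ End(V) a submonoid that is closed in the Zariski topology and contains the identity. Then the set G(M) of invertible elements of M is open in M. -/

import Mathlib

/-- A subset of the space of `n × n` matrices over `K` is Zariski closed if it is the common
zero locus of a set of polynomials in the matrix entries. -/
def IsZariskiClosedMatrixSet {K : Type*} [Field K] (n : ℕ)
    (C : Set (Matrix (Fin n) (Fin n) K)) : Prop :=
  ∃ P : Set (MvPolynomial (Fin n × Fin n) K),
    C = {A | ∀ p ∈ P, MvPolynomial.eval (fun ij => A ij.1 ij.2) p = 0}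

open MvPolynomial in
/-- zero sets of sets of polynomials are zero loci of ideals, and conversely -/
lemma zeroSet_eq_zeroLocus {K : Type*} [Field K] {σ : Type*}
    (P : Set (MvPolynomial σ K)) :
    {x : σ → K | ∀ p ∈ P, eval x p = 0} = zeroLocus K (Ideal.span P) := by
  rw [MvPolynomial.zeroLocus_span]
  rfl

open MvPolynomial in
lemma zeroLocus_vanishingIdeal_zeroLocus {K : Type*} [Field K] {σ : Type*}
    (I : Ideal (MvPolynomial σ K)) :
    zeroLocus K (vanishingIdeal K (zeroLocus K I)) = zeroLocus K I := by
  apply le_antisymm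
  · exact zeroLocus_anti_mono (le_vanishingIdeal_zeroLocus I)
  · exact zeroLocus_vanishingIdeal_le _

/-- Let `K` be an algebraically closed field and `M ⊆ End(V) = Matrix n n K` a Zariski-closed
submonoid containing the identity.  Then the set `G(M)` of invertible elements of `M` is open
in `M`: its complement in `M` is the intersection of `M` with a Zariski-closed set. -/
theorem units_open_in_closed_submonoid {K : Type*} [Field K] [IsAlgClosed K] (n : ℕ)
    (M : Submonoid (Matrix (Fin n) (Fin n) K))
    (hM : IsZariskiClosedMatrixSet n (M : Set (Matrix (Fin n) (Fin n) K))) :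
    ∃ C : Set (Matrix (Fin n) (Fin n) K), IsZariskiClosedMatrixSet n C ∧
      {A : Matrix (Fin n) (Fin n) K | A ∈ M ∧ ∃ B ∈ M, A * B = 1 ∧ B * A = 1} =
        (M : Set (Matrix (Fin n) (Fin n) K)) \ C := by
  classical
  obtain ⟨P, hP⟩ := hM
  -- the evaluation map from matrices to points
  set e : Matrix (Fin n) (Fin n) K → (Fin n × Fin n → K) :=
    fun A ij => A ij.1 ij.2 with he
  have hmem : ∀ A : Matrix (Fin n) (Fin n) K,
      A ∈ M ↔ ∀ p ∈ P, MvPolynomial.eval (e A) p = 0 := by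
    intro A
    constructor
    · intro hA p hp
      have : A ∈ (M : Set (Matrix (Fin n) (Fin n) K)) := hA
      rw [hP] at this
      exact this p hp
    · intro h
      have : A ∈ {A | ∀ p ∈ P, MvPolynomial.eval (fun ij => A ij.1 ij.2) p = 0} := h
      rw [← hP] at this
      exact this
  refine ⟨{A | A.det = 0}, ?_, ?_⟩
  · refine ⟨{(Matrix.mvPolynomialX (Fin n) (Fin n) K).det}, ?_⟩
    ext A
    simp only [Set.mem_setOf_eq, Set.mem_singleton_iff, forall_eq]
    rw [RingHom.map_det, Matrix.mvPolynomialX_mapMatrix_eval]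
  · ext A
    simp only [Set.mem_setOf_eq, Set.mem_diff, SetLike.mem_coe]
    constructor
    · rintro ⟨hA, B, hB, hAB, hBA⟩
      refine ⟨hA, ?_⟩
      intro hdet
      have := congrArg Matrix.det hAB
      rw [Matrix.det_mul, Matrix.det_one, hdet, zero_mul] at this
      exact zero_ne_one this
    · rintro ⟨hA, hdet⟩
      refine ⟨hA, ?_⟩
      -- A is invertible as a matrix
      have hdu : IsUnit A.det := isUnit_iff_ne_zero.mpr hdet
      have hu : IsUnit A := (Matrix.isUnit_iff_isUnit_det A).mpr hdu
      -- the descending chain of subsets A^k M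
      set S : ℕ → Set (Fin n × Fin n → K) :=
        fun k => e '' {X | ∃ m ∈ M, X = A ^ k * m} with hS
      -- each S k is a zero locus
      have hSclosed : ∀ k, ∃ I : Ideal (MvPolynomial (Fin n × Fin n) K),
          S k = MvPolynomial.zeroLocus K I := by
        intro k
        set B : Matrix (Fin n) (Fin n) K := (A⁻¹) ^ k with hB
        have hiA : A⁻¹ * A = 1 := Matrix.nonsing_inv_mul _ hdu
        have hAi : A * A⁻¹ = 1 := Matrix.mul_nonsing_inv _ hdu
        have hBA : B * A ^ k = 1 := by
          rw [hB]; clear hB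
          induction k with
          | zero => simp
          | succ k ih =>
            rw [pow_succ, pow_succ']
            calc A⁻¹ ^ k * A⁻¹ * (A * A ^ k) = A⁻¹ ^ k * (A⁻¹ * A) * A ^ k := by
                  rw [mul_assoc, mul_assoc, mul_assoc]
              _ = 1 := by rw [hiA, mul_one, ih]
        have hAB : A ^ k * B = 1 := mul_eq_one_comm.mp hBA
        -- substitution polynomials
        set σf : (Fin n × Fin n) → MvPolynomial (Fin n × Fin n) K :=
          fun ij => ∑ l, MvPolynomial.C (B ij.1 l) * MvPolynomial.X (l, ij.2) with hσ
        set Q : Set (MvPolynomial (Fin n × Fin n) K) :=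
          (MvPolynomial.bind₁ σf) '' P with hQ
        refine ⟨Ideal.span Q, ?_⟩
        rw [← zeroSet_eq_zeroLocus]
        ext x
        -- the matrix corresponding to x
        set Xm : Matrix (Fin n) (Fin n) K := Matrix.of (fun i j => x (i, j)) with hXm
        have hevalσ : ∀ ij, MvPolynomial.eval x (σf ij) = (B * Xm) ij.1 ij.2 := by
          intro ij
          rw [hσ, Matrix.mul_apply]
          simp [hXm]
        have key : ∀ p, MvPolynomial.eval x (MvPolynomial.bind₁ σf p)
            = MvPolynomial.eval (e (B * Xm)) p := by
          intro p
          rw [MvPolynomial.bind₁, MvPolynomial.aeval_def, MvPolynomial.eval₂_comp_left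
            (MvPolynomial.eval x)]
          congr 1
          · ext c
            simp
          · funext i
            exact hevalσ i
        constructor
        · rintro ⟨Y, ⟨m, hm, rfl⟩, rfl⟩ q hq
          obtain ⟨p, hp, rfl⟩ := hq
          rw [key]
          have : B * (A ^ k * m) = m := by
            rw [← mul_assoc, hBA, one_mul]
          have hXe : Xm = A ^ k * m := by
            ext i j
            simp [hXm, he]
          rw [hXe, this]
          exact (hmem m).mp hm p hp
        · intro hx
          have hmM : B * Xm ∈ M := by
            rw [hmem]
            intro p hp
            rw [← key]
            exact hx _ ⟨p, hp, rfl⟩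
          refine ⟨A ^ k * (B * Xm), ⟨B * Xm, hmM, rfl⟩, ?_⟩
          rw [← mul_assoc, hAB, one_mul]
          funext ij
          simp [he, hXm]
      -- the chain of vanishing ideals is monotone
      have hSmono : ∀ k, S (k + 1) ⊆ S k := by
        rintro k _ ⟨Y, ⟨m, hm, rfl⟩, rfl⟩
        refine ⟨A ^ k * (A * m), ⟨A * m, M.mul_mem hA hm, rfl⟩, ?_⟩
        rw [← mul_assoc, ← pow_succ]
      have hImono : Monotone (fun k => MvPolynomial.vanishingIdeal K (S k)) := by
        apply monotone_nat_of_le_succ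
        intro k
        exact MvPolynomial.vanishingIdeal_anti_mono (hSmono k)
      -- stabilization by Noetherianity
      have hNoeth : IsNoetherian (MvPolynomial (Fin n × Fin n) K)
          (MvPolynomial (Fin n × Fin n) K) := by
        rw [← isNoetherianRing_iff]
        infer_instance
      obtain ⟨k, hk⟩ := monotone_stabilizes_iff_noetherian.mpr hNoeth
        ⟨fun k => MvPolynomial.vanishingIdeal K (S k), hImono⟩
      have hIk : MvPolynomial.vanishingIdeal K (S k) =
          MvPolynomial.vanishingIdeal K (S (k + 1)) := hk (k + 1) (Nat.le_succ k)
      -- recover equality of the sets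
      obtain ⟨I, hI⟩ := hSclosed k
      obtain ⟨I', hI'⟩ := hSclosed (k + 1)
      have hSeq : S k = S (k + 1) := by
        have h1 : MvPolynomial.zeroLocus K (MvPolynomial.vanishingIdeal K (S k)) = S k := by
          rw [hI, zeroLocus_vanishingIdeal_zeroLocus]
        have h2 : MvPolynomial.zeroLocus K (MvPolynomial.vanishingIdeal K (S (k + 1)))
            = S (k + 1) := by
          rw [hI', zeroLocus_vanishingIdeal_zeroLocus]
        rw [← h1, ← h2, hIk]
      -- A ^ k ∈ S k = S (k+1), so A ^ k = A ^ (k+1) * m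
      have hAk : e (A ^ k) ∈ S k := ⟨A ^ k * 1, ⟨1, M.one_mem, rfl⟩, by rw [mul_one]⟩
      rw [hSeq] at hAk
      obtain ⟨Y, ⟨m, hm, rfl⟩, hYe⟩ := hAk
      have hYeq : A ^ (k + 1) * m = A ^ k := by
        ext i j
        have := congrFun hYe (i, j)
        simpa [he] using this
      have hcancel : A * m = 1 := by
        have hu' : IsUnit (A ^ k) := hu.pow k
        apply hu'.mul_left_cancel
        rw [← mul_assoc, ← pow_succ, hYeq, mul_one]
      exact ⟨m, hm, hcancel, mul_eq_one_comm.mp hcancel⟩
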